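/- Let X be a real Banach space with property (F̄) such that every approximable operator X → X factors through a real Hilbert space (i.e., for every approximable v : X → X there are a real Hilbert space H and bounded operators a : X → H and b : H → X with v = b ∘ a). Then X is isomorphic (linearly homeomorphic) to a Hilbert space. -/

import Mathlib

set_option maxSynthPendingDepth 3

open Filter Topology Metric NormedSpace Function

/-- `u` is a finite-rank operator: its range is finite-dimensional. -/
def FinRankOp {X Y : Type*} [NormedAddCommGroup X] [NormedSpace ℝ X]
    [NormedAddCommGroup Y] [NormedSpace ℝ Y] (u : X →L[ℝ] Y) : Prop :=
  FiniteDimensional ℝ (LinearMap.range (u : X →ₗ[ℝ] Y))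

/-- `u` is approximable: a limit in operator norm of finite-rank operators. -/
def ApproxOp {X Y : Type*} [NormedAddCommGroup X] [NormedSpace ℝ X]
    [NormedAddCommGroup Y] [NormedSpace ℝ Y] (u : X →L[ℝ] Y) : Prop :=
  u ∈ closure {f : X →L[ℝ] Y | FinRankOp f}

/-- `u` is a compact operator: it maps the closed unit ball to a relatively compact set. -/
def CompactOp {X Y : Type*} [NormedAddCommGroup X] [NormedSpace ℝ X]
    [NormedAddCommGroup Y] [NormedSpace ℝ Y] (u : X →L[ℝ] Y) : Prop :=
  IsCompact (closure (u '' Metric.closedBall 0 1))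

/-- Property (𝒦): every compact subset is contained in the closure of the image of the
closed unit ball under some compact operator `X → X`. -/
def PropertyK (X : Type*) [NormedAddCommGroup X] [NormedSpace ℝ X] : Prop :=
  ∀ K : Set X, IsCompact K →
    ∃ v : X →L[ℝ] X, CompactOp v ∧ K ⊆ closure (v '' Metric.closedBall 0 1)

/-- Property (F̄): every compact subset is contained in the closure of the image of the
closed unit ball under some approximable operator `X → X`. -/
def PropertyF (X : Type*) [NormedAddCommGroup X] [NormedSpace ℝ X] : Prop :=
  ∀ K : Set X, IsCompact K →
    ∃ v : X →L[ℝ] X, ApproxOp v ∧ K ⊆ closure (v '' Metric.closedBall 0 1)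

/-- `X` is isomorphic (linearly homeomorphic) to a real Hilbert space. -/
def IsomorphicToHilbert (X : Type u) [NormedAddCommGroup X] [NormedSpace ℝ X] : Prop :=
  ∃ (H : Type u) (_ : NormedAddCommGroup H) (_ : InnerProductSpace ℝ H) (_ : CompleteSpace H),
    Nonempty (X ≃L[ℝ] H)


open scoped Pointwise

set_option maxHeartbeats 1000000

universe u



/-- A symmetric positive bilinear form on the dual of `X`, bounded by `C`, dominating
evaluations at points of `s`. -/
structure GoodFormX (X : Type u) [NormedAddCommGroup X] [NormedSpace ℝ X]
    (s : Set X) (C : ℝ) where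
  B : StrongDual ℝ X → StrongDual ℝ X → ℝ
  symm : ∀ f g, B f g = B g f
  addl : ∀ f f' g, B (f + f') g = B f g + B f' g
  smull : ∀ (c : ℝ) (f g), B (c • f) g = c * B f g
  nonneg : ∀ f, 0 ≤ B f f
  bound : ∀ f g, |B f g| ≤ C * (‖f‖ * ‖g‖)
  lower : ∀ x ∈ s, ∀ f, (f x) ^ 2 ≤ B f f

variable {X : Type u} [NormedAddCommGroup X] [NormedSpace ℝ X]

theorem step1 [CompleteSpace X]
    (h : ∀ v : X →L[ℝ] X, ApproxOp v →
      ∃ (H : Type u) (_ : NormedAddCommGroup H) (_ : InnerProductSpace ℝ H)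
        (_ : CompleteSpace H) (a : X →L[ℝ] H) (b : H →L[ℝ] X), v = b.comp a)
    {K : Set X} {v : X →L[ℝ] X} (hv : ApproxOp v)
    (hKv : K ⊆ closure (v '' Metric.closedBall 0 1)) :
    ∃ C : ℝ, 0 ≤ C ∧ Nonempty (GoodFormX X K C) := by
  obtain ⟨H, i1, i2, i3, a, b, rfl⟩ := h v hv
  letI := i1; letI := i2; letI := i3
  set β : StrongDual ℝ X → H := fun f => (InnerProductSpace.toDual ℝ H).symm (f.comp b) with hβ
  have hβnorm : ∀ f, ‖β f‖ ≤ ‖f‖ * ‖b‖ := by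
    intro f
    calc ‖β f‖ = ‖f.comp b‖ := (InnerProductSpace.toDual ℝ H).symm.norm_map _
    _ ≤ ‖f‖ * ‖b‖ := ContinuousLinearMap.opNorm_comp_le _ _
  have hβapp : ∀ (f : StrongDual ℝ X) (w : H), (inner ℝ (β f) w : ℝ) = f (b w) := by
    intro f w
    exact InnerProductSpace.toDual_symm_apply
  refine ⟨(‖a‖ * ‖b‖) ^ 2, by positivity, ⟨⟨fun f g => ‖a‖ ^ 2 * (inner ℝ (β f) (β g) : ℝ),
    ?_, ?_, ?_, ?_, ?_, ?_⟩⟩⟩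
  · intro f g; rw [real_inner_comm]
  · intro f f' g
    have hadd : β (f + f') = β f + β f' := by
      simp [hβ, ContinuousLinearMap.add_comp, map_add]
    rw [hadd, inner_add_left]; ring
  · intro c f g
    have hsm : β (c • f) = c • β f := by
      simp [hβ, ContinuousLinearMap.smul_comp, map_smulₛₗ, starRingEnd_apply, star_trivial]
    rw [hsm, real_inner_smul_left]; ring
  · intro f
    have := real_inner_self_nonneg (x := β f)
    positivity
  · intro f g
    have h1 : |(inner ℝ (β f) (β g) : ℝ)| ≤ ‖β f‖ * ‖β g‖ := abs_real_inner_le_norm _ _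
    have h2 : ‖β f‖ * ‖β g‖ ≤ (‖f‖ * ‖b‖) * (‖g‖ * ‖b‖) := by
      apply mul_le_mul (hβnorm f) (hβnorm g) (norm_nonneg _)
      positivity
    have h3 : |‖a‖ ^ 2 * (inner ℝ (β f) (β g) : ℝ)| = ‖a‖ ^ 2 * |(inner ℝ (β f) (β g) : ℝ)| := by
      rw [abs_mul, abs_of_nonneg (by positivity : (0:ℝ) ≤ ‖a‖ ^ 2)]
    rw [h3]
    calc ‖a‖ ^ 2 * |(inner ℝ (β f) (β g) : ℝ)| ≤ ‖a‖ ^ 2 * ((‖f‖ * ‖b‖) * (‖g‖ * ‖b‖)) := by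
          apply mul_le_mul_of_nonneg_left (le_trans h1 h2) (by positivity)
    _ = (‖a‖ * ‖b‖) ^ 2 * (‖f‖ * ‖g‖) := by ring
  · intro x hx f
    have hcl : IsClosed {z : X | (f z) ^ 2 ≤ ‖a‖ ^ 2 * (inner ℝ (β f) (β f) : ℝ)} := by
      apply isClosed_le
      · exact (f.continuous.pow 2)
      · exact continuous_const
    have hsub : (b.comp a) '' Metric.closedBall 0 1 ⊆
        {z : X | (f z) ^ 2 ≤ ‖a‖ ^ 2 * (inner ℝ (β f) (β f) : ℝ)} := by
      rintro z ⟨y, hy, rfl⟩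
      have hy1 : ‖y‖ ≤ 1 := by simpa [Metric.mem_closedBall, dist_eq_norm] using hy
      have : f ((b.comp a) y) = (inner ℝ (β f) (a y) : ℝ) := by
        rw [hβapp]; rfl
      simp only [Set.mem_setOf_eq, this]
      have h1 : |(inner ℝ (β f) (a y) : ℝ)| ≤ ‖β f‖ * ‖a y‖ := abs_real_inner_le_norm _ _
      have h2 : ‖a y‖ ≤ ‖a‖ := by
        calc ‖a y‖ ≤ ‖a‖ * ‖y‖ := a.le_opNorm y
        _ ≤ ‖a‖ * 1 := by nlinarith [norm_nonneg a]
        _ = ‖a‖ := mul_one _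
      have h3 : (inner ℝ (β f) (a y) : ℝ) ^ 2 ≤ (‖β f‖ * ‖a‖) ^ 2 := by
        rw [← sq_abs]
        apply pow_le_pow_left₀ (abs_nonneg _)
        calc |(inner ℝ (β f) (a y) : ℝ)| ≤ ‖β f‖ * ‖a y‖ := h1
        _ ≤ ‖β f‖ * ‖a‖ := by nlinarith [norm_nonneg (β f)]
      calc (inner ℝ (β f) (a y) : ℝ) ^ 2 ≤ (‖β f‖ * ‖a‖) ^ 2 := h3
      _ = ‖a‖ ^ 2 * ‖β f‖ ^ 2 := by ring
      _ = ‖a‖ ^ 2 * (inner ℝ (β f) (β f) : ℝ) := by rw [real_inner_self_eq_norm_sq]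
    exact closure_minimal hsub hcl (hKv hx)

/-- The glued set `{0} ∪ ⋃ₖ 2⁻ᵏ•Fₖ` is compact. -/
theorem compactGlue [CompleteSpace X] (F : ℕ → Finset X)
    (hF : ∀ k, (F k : Set X) ⊆ closedBall 0 1) :
    IsCompact (insert (0:X) (⋃ k, ((1/2:ℝ)^k) • ((F k : Set X)))) := by
  set K := insert (0:X) (⋃ k, ((1/2:ℝ)^k) • ((F k : Set X))) with hK
  set A : ℕ → Set X := fun N => insert (0:X) (⋃ k ∈ Finset.range N, ((1/2:ℝ)^k) • ((F k : Set X)))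
    with hA
  have hAfin : ∀ N, (A N).Finite := by
    intro N
    apply Set.Finite.insert
    apply Set.Finite.biUnion (Finset.range N).finite_toSet
    intro k _
    exact ((F k).finite_toSet).smul_set
  have hAK : ∀ N, A N ⊆ K := by
    intro N x hx
    rcases hx with rfl | hx
    · exact Set.mem_insert _ _
    · simp only [Set.mem_iUnion, exists_prop] at hx
      obtain ⟨k, _, hk⟩ := hx
      exact Set.mem_insert_of_mem _ (Set.mem_iUnion.mpr ⟨k, hk⟩)
  have hnorm : ∀ k, ∀ z ∈ ((1/2:ℝ)^k) • ((F k : Set X)), ‖z‖ ≤ (1/2:ℝ)^k := by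
    intro k z hz
    obtain ⟨y, hy, rfl⟩ := hz
    have : ‖y‖ ≤ 1 := by simpa [Metric.mem_closedBall, dist_eq_norm] using hF k hy
    rw [norm_smul]
    have h2 : |(1/2:ℝ)^k| = (1/2:ℝ)^k := abs_of_pos (by positivity)
    simp only [Real.norm_eq_abs, h2]
    nlinarith [pow_pos (by norm_num : (0:ℝ) < 1/2) k]
  have hcover : ∀ N, K ⊆ A N ∪ closedBall 0 ((1/2:ℝ)^N) := by
    intro N x hx
    rcases hx with rfl | hx
    · exact Or.inl (Set.mem_insert _ _)
    · obtain ⟨k, hk⟩ := Set.mem_iUnion.mp hx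
      by_cases hkN : k < N
      · left
        refine Set.mem_insert_of_mem _ ?_
        simp only [Set.mem_iUnion, exists_prop]
        exact ⟨k, Finset.mem_range.mpr hkN, hk⟩
      · right
        rw [Metric.mem_closedBall, dist_eq_norm, sub_zero]
        calc ‖x‖ ≤ (1/2:ℝ)^k := hnorm k x hk
        _ ≤ (1/2:ℝ)^N := pow_le_pow_of_le_one (by norm_num) (by norm_num) (le_of_not_gt hkN)
  have hclosed : IsClosed K := by
    have hKeq : K = ⋂ N, (A N ∪ closedBall 0 ((1/2:ℝ)^N)) := by
      apply Set.Subset.antisymm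
      · exact Set.subset_iInter hcover
      · intro x hx
        by_cases hx0 : x = 0
        · exact hx0 ▸ Set.mem_insert _ _
        · have hxn : 0 < ‖x‖ := norm_pos_iff.mpr hx0
          obtain ⟨N, hN⟩ := exists_pow_lt_of_lt_one hxn (by norm_num : (1/2:ℝ) < 1)
          have := Set.mem_iInter.mp hx N
          rcases this with hmem | hmem
          · exact hAK N hmem
          · exfalso
            rw [Metric.mem_closedBall, dist_eq_norm, sub_zero] at hmem
            linarith
    rw [hKeq]
    apply isClosed_iInter
    intro N
    exact IsClosed.union (hAfin N).isClosed Metric.isClosed_closedBall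
  have htb : TotallyBounded K := by
    rw [Metric.totallyBounded_iff]
    intro ε hε
    obtain ⟨N, hN⟩ := exists_pow_lt_of_lt_one hε (by norm_num : (1/2:ℝ) < 1)
    refine ⟨A N, hAfin N, ?_⟩
    intro x hx
    rcases hcover N hx with hmem | hmem
    · exact Set.mem_biUnion hmem (Metric.mem_ball_self hε)
    · rw [Metric.mem_closedBall, dist_eq_norm, sub_zero] at hmem
      refine Set.mem_biUnion (Set.mem_insert _ _) ?_
      rw [Metric.mem_ball, dist_eq_norm, sub_zero]
      linarith
  exact htb.isCompact_of_isClosed hclosed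

theorem step2 [CompleteSpace X]
    (hX : PropertyF X)
    (h : ∀ v : X →L[ℝ] X, ApproxOp v →
      ∃ (H : Type u) (_ : NormedAddCommGroup H) (_ : InnerProductSpace ℝ H)
        (_ : CompleteSpace H) (a : X →L[ℝ] H) (b : H →L[ℝ] X), v = b.comp a) :
    ∃ C : ℝ, 0 < C ∧ ∀ F : Finset X, (F : Set X) ⊆ closedBall 0 1 →
      Nonempty (GoodFormX X (F : Set X) C) := by
  by_contra hcon
  push_neg at hcon
  have hbad : ∀ k : ℕ, ∃ F : Finset X, (F : Set X) ⊆ closedBall 0 1 ∧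
      ¬ Nonempty (GoodFormX X (F : Set X) ((4:ℝ)^k * (k+1))) := by
    intro k
    obtain ⟨F, h1, h2⟩ := hcon ((4:ℝ)^k * (k+1)) (by positivity)
    exact ⟨F, h1, not_nonempty_iff.mpr h2⟩
  choose F hF1 hF2 using hbad
  set K := insert (0:X) (⋃ k, ((1/2:ℝ)^k) • ((F k : Set X))) with hKdef
  have hKcompact : IsCompact K := compactGlue F hF1
  obtain ⟨v, hv, hKv⟩ := hX K hKcompact
  obtain ⟨C₀, hC₀, ⟨G⟩⟩ := step1 h hv hKv
  set k := ⌈C₀⌉₊ with hk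
  apply hF2 k
  have hC₀k : C₀ ≤ (k:ℝ) + 1 := by
    have := Nat.le_ceil C₀
    push_cast
    linarith [this]
  have hpow : (4:ℝ)^k * ((1/2:ℝ)^k)^2 = 1 := by
    rw [← pow_mul, show (1/2:ℝ)^(k*2) = ((1/2:ℝ)^2)^k by rw [← pow_mul, mul_comm], ← mul_pow]
    norm_num
  refine ⟨⟨fun f g => (4:ℝ)^k * G.B f g, ?_, ?_, ?_, ?_, ?_, ?_⟩⟩
  · intro f g; rw [G.symm]
  · intro f f' g; rw [G.addl]; ring
  · intro c f g; rw [G.smull]; ring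
  · intro f
    have := G.nonneg f
    positivity
  · intro f g
    rw [abs_mul, abs_of_nonneg (by positivity : (0:ℝ) ≤ (4:ℝ)^k)]
    calc (4:ℝ)^k * |G.B f g| ≤ (4:ℝ)^k * (C₀ * (‖f‖ * ‖g‖)) := by
          apply mul_le_mul_of_nonneg_left (G.bound f g) (by positivity)
    _ ≤ (4:ℝ)^k * (((k:ℝ)+1) * (‖f‖ * ‖g‖)) := by
          apply mul_le_mul_of_nonneg_left _ (by positivity)
          apply mul_le_mul_of_nonneg_right hC₀k (by positivity)
    _ = (4:ℝ)^k * ((k:ℝ)+1) * (‖f‖ * ‖g‖) := by ring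
  · intro x hx f
    have hmem : ((1/2:ℝ)^k) • x ∈ K := by
      refine Set.mem_insert_of_mem _ ?_
      exact Set.mem_iUnion.mpr ⟨k, Set.smul_mem_smul_set hx⟩
    have hlow := G.lower _ hmem f
    have heval : f (((1/2:ℝ)^k) • x) = ((1/2:ℝ)^k) * f x := by
      rw [map_smul]; rfl
    rw [heval] at hlow
    have : ((1/2:ℝ)^k * f x)^2 = ((1/2:ℝ)^k)^2 * (f x)^2 := by ring
    rw [this] at hlow
    calc (f x)^2 = (4:ℝ)^k * (((1/2:ℝ)^k)^2 * (f x)^2) := by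
          rw [← mul_assoc, hpow, one_mul]
    _ ≤ (4:ℝ)^k * G.B f f := by
          apply mul_le_mul_of_nonneg_left hlow (by positivity)

theorem step3 [CompleteSpace X]
    (hX : PropertyF X)
    (h : ∀ v : X →L[ℝ] X, ApproxOp v →
      ∃ (H : Type u) (_ : NormedAddCommGroup H) (_ : InnerProductSpace ℝ H)
        (_ : CompleteSpace H) (a : X →L[ℝ] H) (b : H →L[ℝ] X), v = b.comp a) :
    ∃ C : ℝ, 0 < C ∧ Nonempty (GoodFormX X (closedBall 0 1) C) := by
  classical
  obtain ⟨C, hC, hall⟩ := step2 hX h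
  refine ⟨C, hC, ?_⟩
  letI I := {F : Finset X // (F : Set X) ⊆ closedBall 0 1}
  letI : SemilatticeSup I := Subtype.semilatticeSup (by
    intro F G hF hG
    intro x hx
    rcases Finset.mem_union.mp (by simpa [Finset.sup_eq_union] using hx) with hx | hx
    · exact hF hx
    · exact hG hx)
  haveI : Nonempty I := ⟨⟨∅, by simp⟩⟩
  set U : Ultrafilter I := Ultrafilter.of atTop with hUdef
  have hU : (U : Filter I) ≤ atTop := Ultrafilter.of_le _
  have hsel : ∀ F : I, Nonempty (GoodFormX X (F.1 : Set X) C) := fun F => hall F.1 F.2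
  let Gs : ∀ F : I, GoodFormX X (F.1 : Set X) C := fun F => Classical.choice (hsel F)
  have hex : ∀ f g : StrongDual ℝ X, ∃ L : ℝ, Tendsto (fun F : I => (Gs F).B f g) (U : Filter I) (𝓝 L) := by
    intro f g
    have hmem : ∀ F : I, (Gs F).B f g ∈ Set.Icc (-(C * (‖f‖ * ‖g‖))) (C * (‖f‖ * ‖g‖)) := by
      intro F
      have := abs_le.mp ((Gs F).bound f g)
      exact ⟨this.1, this.2⟩
    have hle : ↑(U.map (fun F : I => (Gs F).B f g)) ≤
        𝓟 (Set.Icc (-(C * (‖f‖ * ‖g‖))) (C * (‖f‖ * ‖g‖))) := by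
      rw [Ultrafilter.coe_map, le_principal_iff, mem_map]
      exact Eventually.of_forall hmem
    obtain ⟨L, _, hL⟩ := (isCompact_Icc).ultrafilter_le_nhds _ hle
    exact ⟨L, by rwa [Ultrafilter.coe_map] at hL⟩
  choose Bl hBl using hex
  refine ⟨⟨Bl, ?_, ?_, ?_, ?_, ?_, ?_⟩⟩
  · intro f g
    refine tendsto_nhds_unique (hBl f g) ?_
    have : (fun F : I => (Gs F).B f g) = fun F : I => (Gs F).B g f := by
      funext F; exact (Gs F).symm f g
    rw [this]; exact hBl g f
  · intro f f' g
    refine tendsto_nhds_unique (hBl (f + f') g) ?_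
    have : (fun F : I => (Gs F).B (f + f') g)
        = fun F : I => (Gs F).B f g + (Gs F).B f' g := by
      funext F; exact (Gs F).addl f f' g
    rw [this]; exact (hBl f g).add (hBl f' g)
  · intro c f g
    refine tendsto_nhds_unique (hBl (c • f) g) ?_
    have : (fun F : I => (Gs F).B (c • f) g) = fun F : I => c * (Gs F).B f g := by
      funext F; exact (Gs F).smull c f g
    rw [this]; exact (hBl f g).const_mul c
  · intro f
    exact ge_of_tendsto (hBl f f) (Eventually.of_forall fun F => (Gs F).nonneg f)
  · intro f g
    rw [abs_le]
    constructor
    · exact ge_of_tendsto (hBl f g)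
        (Eventually.of_forall fun F => (abs_le.mp ((Gs F).bound f g)).1)
    · exact le_of_tendsto (hBl f g)
        (Eventually.of_forall fun F => (abs_le.mp ((Gs F).bound f g)).2)
  · intro x hx f
    have hxI : ((({x} : Finset X) : Set X)) ⊆ closedBall 0 1 := by
      simpa using hx
    set F₀ : I := ⟨{x}, hxI⟩ with hF₀
    have hev : ∀ᶠ F : I in (U : Filter I), (f x)^2 ≤ (Gs F).B f f := by
      apply Eventually.filter_mono hU
      filter_upwards [eventually_ge_atTop F₀] with F hF
      have hxF : x ∈ (F.1 : Set X) := by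
        have hsub : F₀.1 ⊆ F.1 := hF
        exact hsub (Finset.mem_singleton_self x)
      exact (Gs F).lower x hxF f
    exact ge_of_tendsto (hBl f f) hev

/-- Proposition 3 for F̄: if `X` has property (F̄) and every approximable operator `X → X` factors
through a real Hilbert space, then `X` is isomorphic to a Hilbert space. -/
theorem isomorphicToHilbert_of_property_F (X : Type u) [NormedAddCommGroup X]
    [NormedSpace ℝ X] [CompleteSpace X] (hX : PropertyF X)
    (h : ∀ v : X →L[ℝ] X, ApproxOp v →
      ∃ (H : Type u) (_ : NormedAddCommGroup H) (_ : InnerProductSpace ℝ H)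
        (_ : CompleteSpace H) (a : X →L[ℝ] H) (b : H →L[ℝ] X), v = b.comp a) :
    IsomorphicToHilbert X := by
  obtain ⟨C, hCpos, ⟨G⟩⟩ := step3 hX h
  set D := max C 1 with hD
  have hC1 : (1:ℝ) ≤ D := le_max_right _ _
  have hDpos : (0:ℝ) < D := lt_of_lt_of_le one_pos hC1
  have hbound : ∀ f : StrongDual ℝ X, G.B f f ≤ D * ‖f‖^2 := by
    intro f
    calc G.B f f ≤ |G.B f f| := le_abs_self _
    _ ≤ C * (‖f‖*‖f‖) := G.bound f f
    _ ≤ D * ‖f‖^2 := by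
        rw [sq]
        apply mul_le_mul_of_nonneg_right (le_max_left _ _) (by positivity)
  have hlow : ∀ f : StrongDual ℝ X, ‖f‖^2 ≤ G.B f f := by
    intro f
    have hnn := G.nonneg f
    have hf : ‖f‖ ≤ Real.sqrt (G.B f f) := by
      apply ContinuousLinearMap.opNorm_le_bound _ (Real.sqrt_nonneg _)
      intro y
      rcases eq_or_ne y 0 with rfl | hy
      · simp
      · have hyn : 0 < ‖y‖ := norm_pos_iff.mpr hy
        have hmem : ‖y‖⁻¹ • y ∈ closedBall (0:X) 1 := by
          simp [Metric.mem_closedBall, dist_eq_norm, norm_smul, abs_of_pos (inv_pos.mpr hyn),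
            inv_mul_cancel₀ (ne_of_gt hyn)]
        have hl := G.lower _ hmem f
        have heval : f (‖y‖⁻¹ • y) = ‖y‖⁻¹ * f y := by rw [map_smul]; rfl
        rw [heval] at hl
        have habs : |‖y‖⁻¹ * f y| ≤ Real.sqrt (G.B f f) := by
          rw [← Real.sqrt_sq_eq_abs]
          exact Real.sqrt_le_sqrt hl
        rw [abs_mul, abs_of_pos (inv_pos.mpr hyn)] at habs
        have h2 := mul_le_mul_of_nonneg_left habs (le_of_lt hyn)
        rw [← mul_assoc, mul_inv_cancel₀ (ne_of_gt hyn), one_mul] at h2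
        calc ‖f y‖ = |f y| := rfl
        _ ≤ ‖y‖ * Real.sqrt (G.B f f) := h2
        _ = Real.sqrt (G.B f f) * ‖y‖ := mul_comm _ _
    calc ‖f‖^2 ≤ (Real.sqrt (G.B f f))^2 := by
          apply pow_le_pow_left₀ (norm_nonneg f) hf
    _ = G.B f f := Real.sq_sqrt hnn
  -- the Hilbert-space copy of the dual
  letI Hty := WithLp 2 (StrongDual ℝ X)
  letI eL : Hty ≃ₗ[ℝ] StrongDual ℝ X := WithLp.linearEquiv 2 ℝ (StrongDual ℝ X)
  letI core : InnerProductSpace.Core ℝ Hty :=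
  { inner := fun f g => G.B (eL f) (eL g)
    conj_inner_symm := fun f g => by
      simpa [starRingEnd_apply] using G.symm (eL g) (eL f)
    re_inner_nonneg := fun f => by simpa using G.nonneg (eL f)
    definite := fun f hf => by
      have h0 : G.B (eL f) (eL f) = 0 := hf
      have : ‖eL f‖^2 ≤ 0 := h0 ▸ hlow (eL f)
      have hef : eL f = 0 := by
        have := norm_nonneg (eL f)
        have h2 : ‖eL f‖ = 0 := by nlinarith
        exact norm_eq_zero.mp h2
      exact eL.injective (by simpa using hef)
    add_left := fun f g z => by simpa [map_add] using G.addl (eL f) (eL g) (eL z)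
    smul_left := fun f g r => by
      simpa [map_smul, starRingEnd_apply] using G.smull r (eL f) (eL g) }
  letI : NormedAddCommGroup Hty := core.toNormedAddCommGroup
  letI : InnerProductSpace ℝ Hty := InnerProductSpace.ofCore core.toCore
  have hinner : ∀ f : Hty, (inner ℝ f f : ℝ) = G.B (eL f) (eL f) := fun f => rfl
  have hnormsq : ∀ f : Hty, ‖f‖^2 = G.B (eL f) (eL f) := by
    intro f
    rw [← hinner, ← real_inner_self_eq_norm_sq]
  -- norm comparisons
  have hcmp1 : ∀ f : Hty, ‖eL f‖ ≤ ‖f‖ := by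
    intro f
    have h1 : ‖eL f‖^2 ≤ ‖f‖^2 := by rw [hnormsq]; exact hlow (eL f)
    nlinarith [norm_nonneg (eL f), norm_nonneg f]
  have hcmp2 : ∀ f : Hty, ‖f‖ ≤ Real.sqrt D * ‖eL f‖ := by
    intro f
    have h1 : ‖f‖^2 ≤ D * ‖eL f‖^2 := by rw [hnormsq]; exact hbound (eL f)
    have h2 : ‖f‖^2 ≤ (Real.sqrt D * ‖eL f‖)^2 := by
      rw [mul_pow, Real.sq_sqrt (le_of_lt hDpos)]; exact h1
    nlinarith [norm_nonneg f, Real.sqrt_nonneg D, norm_nonneg (eL f),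
      mul_nonneg (Real.sqrt_nonneg D) (norm_nonneg (eL f))]
  -- continuous linear equivalence between the dual and its Hilbertian copy
  letI eCL : Hty ≃L[ℝ] StrongDual ℝ X :=
    LinearEquiv.toContinuousLinearEquivOfBounds eL 1 (Real.sqrt D)
      (fun f => by rw [one_mul]; exact hcmp1 f)
      (fun f => by
        have : eL (eL.symm f) = f := eL.apply_symm_apply f
        calc ‖eL.symm f‖ ≤ Real.sqrt D * ‖eL (eL.symm f)‖ := hcmp2 _
        _ = Real.sqrt D * ‖f‖ := by rw [this])
  haveI : CompleteSpace Hty := by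
    have hemb : IsUniformEmbedding (eCL : Hty →L[ℝ] StrongDual ℝ X) :=
      ContinuousLinearMap.isUniformEmbedding_of_bound (K := ⟨Real.sqrt D, Real.sqrt_nonneg D⟩)
        (eCL : Hty →L[ℝ] StrongDual ℝ X) (fun f => by
          have h1 : ‖f‖ ≤ Real.sqrt D * ‖eL f‖ := hcmp2 f
          exact h1)
    exact (completeSpace_congr (e := eCL.toEquiv) hemb).mpr inferInstance
  -- the embedding of X into Hty
  letI jmap : X →L[ℝ] StrongDual ℝ (StrongDual ℝ X) := NormedSpace.inclusionInDoubleDual ℝ X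
  have hjnorm : ∀ x : X, ‖jmap x‖ = ‖x‖ := fun x =>
    (NormedSpace.inclusionInDoubleDualLi ℝ (E := X)).norm_map x
  letI e2 : Hty →L[ℝ] StrongDual ℝ X := (eCL : Hty →L[ℝ] StrongDual ℝ X)
  letI e1 : StrongDual ℝ X →L[ℝ] Hty := (eCL.symm : StrongDual ℝ X →L[ℝ] Hty)
  have he2norm : ‖e2‖ ≤ 1 := by
    apply ContinuousLinearMap.opNorm_le_bound _ zero_le_one
    intro f
    rw [one_mul]
    exact hcmp1 f
  letI S0 : X →ₗ[ℝ] Hty :=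
  { toFun := fun x => (InnerProductSpace.toDual ℝ Hty).symm ((jmap x).comp e2)
    map_add' := by
      intro x y
      rw [map_add, ContinuousLinearMap.add_comp, map_add]
    map_smul' := by
      intro c x
      rw [map_smul, ContinuousLinearMap.smul_comp, map_smulₛₗ]
      simp [starRingEnd_apply] }
  have hS0norm : ∀ x, ‖S0 x‖ = ‖(jmap x).comp e2‖ := fun x =>
    (InnerProductSpace.toDual ℝ Hty).symm.norm_map _
  have hS0upper : ∀ x, ‖S0 x‖ ≤ 1 * ‖x‖ := by
    intro x
    rw [hS0norm, one_mul]
    calc ‖(jmap x).comp e2‖ ≤ ‖jmap x‖ * ‖e2‖ := ContinuousLinearMap.opNorm_comp_le _ _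
    _ ≤ ‖x‖ * 1 := by
        apply mul_le_mul (le_of_eq (hjnorm x)) he2norm (ContinuousLinearMap.opNorm_nonneg e2)
          (norm_nonneg x)
    _ = ‖x‖ := mul_one _
  letI S : X →L[ℝ] Hty := S0.mkContinuous 1 hS0upper
  have hScoe : ∀ x, S x = S0 x := fun x => rfl
  have hSlower : ∀ x : X, ‖x‖ ≤ Real.sqrt D * ‖S x‖ := by
    intro x
    have hcomp : ((jmap x).comp e2).comp e1 = jmap x := by
      apply ContinuousLinearMap.ext
      intro f
      show (jmap x) (e2 (e1 f)) = jmap x f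
      have h5 : e2 (e1 f) = f := eCL.apply_symm_apply f
      rw [h5]
    have he1norm : ‖e1‖ ≤ Real.sqrt D := by
      apply ContinuousLinearMap.opNorm_le_bound _ (Real.sqrt_nonneg _)
      intro f
      have h5 : eL (eCL.symm f) = f := eCL.apply_symm_apply f
      calc ‖e1 f‖ ≤ Real.sqrt D * ‖eL (eCL.symm f)‖ := hcmp2 _
      _ = Real.sqrt D * ‖f‖ := by rw [h5]
    calc ‖x‖ = ‖jmap x‖ := (hjnorm x).symm
    _ = ‖((jmap x).comp e2).comp e1‖ := by rw [hcomp]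
    _ ≤ ‖(jmap x).comp e2‖ * ‖e1‖ := ContinuousLinearMap.opNorm_comp_le _ _
    _ = ‖S x‖ * ‖e1‖ := by rw [hScoe, hS0norm]
    _ ≤ ‖S x‖ * Real.sqrt D := mul_le_mul_of_nonneg_left he1norm (norm_nonneg _)
    _ = Real.sqrt D * ‖S x‖ := mul_comm _ _
  have hanti : AntilipschitzWith ⟨Real.sqrt D, Real.sqrt_nonneg D⟩ S :=
    S.antilipschitz_of_bound (fun x => hSlower x)
  have hclosedrange : IsClosed (Set.range S) :=
    hanti.isClosed_range S.uniformContinuous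
  letI W : Submodule ℝ Hty := LinearMap.range (S : X →ₗ[ℝ] Hty)
  have hWclosed : IsClosed (W : Set Hty) := by
    have hWset : (W : Set Hty) = Set.range S := by
      ext z
      simp only [SetLike.mem_coe, LinearMap.mem_range, Set.mem_range]
      rfl
    rw [hWset]
    exact hclosedrange
  haveI : CompleteSpace W := hWclosed.completeSpace_coe
  letI Scod : X →L[ℝ] W := S.codRestrict W (fun x => LinearMap.mem_range_self _ x)
  have hker : LinearMap.ker (Scod : X →ₗ[ℝ] W) = ⊥ := by
    rw [ContinuousLinearMap.ker_codRestrict]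
    exact LinearMap.ker_eq_bot_of_injective hanti.injective
  have hrange : LinearMap.range (Scod : X →ₗ[ℝ] W) = ⊤ := by
    rw [eq_top_iff]
    rintro ⟨y, hy⟩ -
    obtain ⟨x, hx⟩ := hy
    exact ⟨x, Subtype.ext hx⟩
  letI equiv : X ≃L[ℝ] W := ContinuousLinearEquiv.ofBijective Scod hker hrange
  exact ⟨W, inferInstance, inferInstance, inferInstance, ⟨equiv⟩⟩
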